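/- For every odd positive integer N, the number of distinct prime factors of 2^N + 1 is at least τ(N) - 1, where τ(N) is the number of divisors of N. -/

import Mathlib

open Polynomial Finset ArithmeticFunction
open scoped ArithmeticFunction
open scoped ArithmeticFunction.Moebius

private noncomputable def PhiZ (n : ℕ) : ℤ := (Polynomial.cyclotomic n ℤ).eval 2


lemma PhiZ_pos (n : ℕ) : 0 < PhiZ n :=
  Polynomial.cyclotomic_pos' n (by norm_num : (1:ℤ) < 2)

lemma prod_PhiZ (n : ℕ) (hn : 0 < n) : ∏ i ∈ n.divisors, PhiZ i = 2 ^ n - 1 := by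
  have h := Polynomial.prod_cyclotomic_eq_X_pow_sub_one hn ℤ
  have := congrArg (Polynomial.eval (2:ℤ)) h
  simpa [PhiZ, Polynomial.eval_prod] using this

lemma PhiZ_dvd_sub_one {n : ℕ} (hn : 0 < n) : PhiZ n ∣ 2 ^ n - 1 := by
  rw [← prod_PhiZ n hn]
  exact Finset.dvd_prod_of_mem _ (Nat.mem_divisors_self n hn.ne')

lemma divisors_two_mul {d : ℕ} (hd : Odd d) (h0 : 0 < d) :
    (2 * d).divisors = d.divisors ∪ d.divisors.image (2 * ·) := by
  ext e
  simp only [Nat.mem_divisors, Finset.mem_union, Finset.mem_image]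
  constructor
  · rintro ⟨he, h2d⟩
    rcases Nat.even_or_odd e with he2 | he2
    · obtain ⟨e', rfl⟩ := he2.two_dvd
      right
      exact ⟨e', ⟨(mul_dvd_mul_iff_left (two_ne_zero)).mp he, by positivity⟩, rfl⟩
    · left
      refine ⟨(Nat.Coprime.dvd_of_dvd_mul_left ?_ he), h0.ne'⟩
      have : ¬ (2 ∣ e) := by rw [Nat.odd_iff] at he2; omega
      exact (Nat.coprime_comm.mp ((Nat.prime_two).coprime_iff_not_dvd.mpr this))
  · rintro (⟨he, -⟩ | ⟨e', ⟨he', -⟩, rfl⟩)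
    · exact ⟨he.mul_left 2, by positivity⟩
    · exact ⟨mul_dvd_mul_left 2 he', by positivity⟩

lemma prod_PhiZ_two_mul {d : ℕ} (hd : Odd d) (h0 : 0 < d) :
    ∏ e ∈ d.divisors, PhiZ (2 * e) = 2 ^ d + 1 := by
  have hdisj : Disjoint d.divisors (d.divisors.image (2 * ·)) := by
    rw [Finset.disjoint_right]
    rintro e heimg hediv
    obtain ⟨e', he', rfl⟩ := Finset.mem_image.mp heimg
    have h2 : (2:ℕ) ∣ d := dvd_trans ⟨e', rfl⟩ (Nat.mem_divisors.mp hediv).1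
    have := Nat.odd_iff.mp hd
    omega
  have key : ((2:ℤ) ^ d - 1) * ∏ e ∈ d.divisors, PhiZ (2 * e) = ((2:ℤ)^d - 1) * ((2:ℤ)^d + 1) := by
    have h1 : ∏ i ∈ (2*d).divisors, PhiZ i = 2 ^ (2*d) - 1 := prod_PhiZ _ (by positivity)
    rw [divisors_two_mul hd h0, Finset.prod_union hdisj] at h1
    rw [Finset.prod_image (by intro x hx y hy hxy; simp only at hxy; omega)] at h1
    rw [prod_PhiZ d h0] at h1
    rw [h1, two_mul, pow_add]
    ring
  have hne : ((2:ℤ) ^ d - 1) ≠ 0 := by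
    have : (2:ℤ)^d ≥ 2^1 := pow_le_pow_right₀ (by norm_num) h0
    omega
  exact mul_left_cancel₀ hne key

lemma PhiZ_two_mul_dvd {d : ℕ} (hd : Odd d) (h0 : 0 < d) : PhiZ (2 * d) ∣ 2 ^ d + 1 := by
  rw [← prod_PhiZ_two_mul hd h0]
  exact Finset.dvd_prod_of_mem _ (Nat.mem_divisors_self d h0.ne')

lemma pow_add_one_dvd {d N : ℕ} (h : d ∣ N) (hN : Odd N) (h0 : 0 < d) :
    (2 ^ d + 1 : ℕ) ∣ 2 ^ N + 1 := by
  obtain ⟨m, rfl⟩ := h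
  have hm : Odd m := (Nat.odd_mul.mp hN).2
  have hZ : ((2:ℤ) ^ d + 1) ∣ (2 ^ (d * m) + 1) := by
    have h1 : ((2:ℤ)^d - (-1)) ∣ ((2^d) ^ m - (-1) ^ m) := sub_dvd_pow_sub_pow _ _ m
    rw [hm.neg_one_pow] at h1
    rw [pow_mul]
    simpa using h1
  rw [← Int.natCast_dvd_natCast]
  push_cast
  exact hZ

lemma prime_ne_two_of_dvd {p a : ℕ} (hp : p.Prime) (h0 : 0 < a) (h : p ∣ 2 ^ a + 1) : p ≠ 2 := by
  rintro rfl
  have h2 : 2 ∣ 2 ^ a := dvd_pow_self 2 h0.ne'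
  omega

lemma pow_eq_neg_one_of_dvd {p a : ℕ} (hp : p.Prime) (h0 : 0 < a)
    (h : p ∣ 2 ^ a + 1) : (2 : ZMod p) ^ a = -1 := by
  have : ((2 ^ a + 1 : ℕ) : ZMod p) = 0 := (ZMod.natCast_eq_zero_iff _ _).mpr h
  push_cast at this
  linear_combination this

lemma dvd_of_pow_eq_neg_one {p a : ℕ} (h : (2 : ZMod p) ^ a = -1) : p ∣ 2 ^ a + 1 := by
  rw [← ZMod.natCast_eq_zero_iff]
  push_cast
  rw [h]; ring

lemma two_ne_zero_zmod {p : ℕ} (hp : p.Prime) (hp2 : p ≠ 2) : (2 : ZMod p) ≠ 0 := by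
  intro h
  have h2 : ((2:ℕ) : ZMod p) = 0 := by exact_mod_cast h
  have := (ZMod.natCast_eq_zero_iff 2 p).mp h2
  exact hp2 ((Nat.prime_dvd_prime_iff_eq hp Nat.prime_two).mp this)

lemma dvd_gcd_pow_add_one {p a b : ℕ} (hp : p.Prime) (ha : Odd a) (hb : Odd b)
    (h0a : 0 < a) (h0b : 0 < b)
    (hda : p ∣ 2 ^ a + 1) (hdb : p ∣ 2 ^ b + 1) : p ∣ 2 ^ Nat.gcd a b + 1 := by
  haveI : Fact p.Prime := ⟨hp⟩
  have hp2 : p ≠ 2 := prime_ne_two_of_dvd hp h0a hda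
  have hza : (2 : ZMod p) ^ a = -1 := pow_eq_neg_one_of_dvd hp h0a hda
  have hzb : (2 : ZMod p) ^ b = -1 := pow_eq_neg_one_of_dvd hp h0b hdb
  have hne : (2 : ZMod p) ≠ 0 := two_ne_zero_zmod hp hp2
  set x := Nat.gcdA a b with hx
  set y := Nat.gcdB a b with hy
  have hbez : (Nat.gcd a b : ℤ) = a * x + b * y := Nat.gcd_eq_gcd_ab a b
  have hgodd : Odd (Nat.gcd a b) := by
    obtain ⟨k, hk⟩ := Nat.gcd_dvd_left a b
    exact (Nat.odd_mul.mp (hk ▸ ha)).1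
  have hgoddZ : Odd ((a:ℤ) * x + (b:ℤ) * y) := by
    rw [← hbez]; exact_mod_cast hgodd
  have haZ : Odd (a:ℤ) := by exact_mod_cast ha
  have hbZ : Odd (b:ℤ) := by exact_mod_cast hb
  have hxy : Odd (x + y) := by
    rcases Int.even_or_odd x with hx1 | hx1 <;> rcases Int.even_or_odd y with hy1 | hy1
    · exact absurd hgoddZ (Int.not_odd_iff_even.mpr ((hx1.mul_left _).add (hy1.mul_left _)))
    · exact hx1.add_odd hy1
    · exact hx1.add_even hy1
    · exact absurd hgoddZ (Int.not_odd_iff_even.mpr ((haZ.mul hx1).add_odd (hbZ.mul hy1)))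
  have key : (2 : ZMod p) ^ ((Nat.gcd a b : ℤ)) = -1 := by
    rw [hbez, zpow_add₀ hne, zpow_mul, zpow_mul, zpow_natCast, zpow_natCast, hza, hzb,
      ← zpow_add₀ (neg_ne_zero.mpr (one_ne_zero))]
    exact hxy.neg_one_zpow
  rw [zpow_natCast] at key
  exact dvd_of_pow_eq_neg_one key

lemma orderOf_eq_of_not_dvd {p n : ℕ} (hp : p.Prime) (hn : 0 < n) (hpn : ¬ p ∣ n)
    (hdvd : (p : ℤ) ∣ PhiZ n) : orderOf (2 : ZMod p) = n := by
  haveI : Fact p.Prime := ⟨hp⟩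
  haveI : NeZero ((n : ZMod p)) := ⟨by
    rw [Ne, ZMod.natCast_eq_zero_iff]
    exact hpn⟩
  have hroot : IsRoot (cyclotomic n (ZMod p)) 2 := by
    have hcast : ((PhiZ n : ℤ) : ZMod p) = 0 := by
      rcases hdvd with ⟨c, hc⟩
      rw [hc]
      push_cast
      simp [ZMod.natCast_self]
    rw [IsRoot, ← map_cyclotomic n (Int.castRingHom (ZMod p))]
    have := Polynomial.eval_intCast_map (Int.castRingHom (ZMod p)) (cyclotomic n ℤ) 2
    simpa [PhiZ] using (this.trans hcast)
  have hprim : IsPrimitiveRoot (2 : ZMod p) n := (isRoot_cyclotomic_iff).mp hroot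
  exact hprim.eq_orderOf.symm

lemma PhiZ_dvd_geom {n r : ℕ} (hr : r ∣ n) (h1 : 1 < r) (hn : 0 < n) :
    PhiZ n ∣ ∑ j ∈ Finset.range r, ((2:ℤ) ^ (n / r)) ^ j := by
  set m := n / r with hm
  have hmn : m * r = n := Nat.div_mul_cancel hr
  have hm0 : 0 < m := Nat.div_pos (Nat.le_of_dvd hn hr) (by omega)
  have hmlt : m < n := Nat.div_lt_self hn h1
  -- polynomial divisibility: (X^m - 1) * cyclotomic n ∣ X^n - 1
  have hpoly : (X ^ m - 1 : ℤ[X]) * cyclotomic n ℤ ∣ X ^ n - 1 := by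
    rw [← prod_cyclotomic_eq_X_pow_sub_one hm0 ℤ, ← prod_cyclotomic_eq_X_pow_sub_one hn ℤ]
    have hsub : insert n m.divisors ⊆ n.divisors := by
      intro e he
      rcases Finset.mem_insert.mp he with rfl | he
      · exact Nat.mem_divisors_self _ hn.ne'
      · rcases Nat.mem_divisors.mp he with ⟨hed, -⟩
        exact Nat.mem_divisors.mpr ⟨hed.trans ⟨r, hmn.symm⟩, hn.ne'⟩
    have hnotmem : n ∉ m.divisors := fun hmem =>
      absurd (Nat.le_of_dvd hm0 (Nat.mem_divisors.mp hmem).1) (by omega)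
    calc (∏ i ∈ m.divisors, cyclotomic i ℤ) * cyclotomic n ℤ
        = ∏ i ∈ insert n m.divisors, cyclotomic i ℤ := by
          rw [Finset.prod_insert hnotmem]; ring
      _ ∣ ∏ i ∈ n.divisors, cyclotomic i ℤ := Finset.prod_dvd_prod_of_subset _ _ _ hsub
  -- evaluate at 2
  have heval : ((2:ℤ) ^ m - 1) * PhiZ n ∣ (2:ℤ) ^ n - 1 := by
    obtain ⟨Q, hQ⟩ := hpoly
    refine ⟨Q.eval 2, ?_⟩
    have := congrArg (Polynomial.eval (2:ℤ)) hQ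
    simpa [PhiZ] using this
  have hgeom : (∑ j ∈ Finset.range r, ((2:ℤ) ^ m) ^ j) * ((2:ℤ) ^ m - 1) = (2:ℤ) ^ n - 1 := by
    rw [geom_sum_mul, ← pow_mul, hmn]
  have hne : ((2:ℤ) ^ m - 1) ≠ 0 := by
    have : (2:ℤ)^m ≥ 2^1 := pow_le_pow_right₀ (by norm_num) hm0
    omega
  obtain ⟨Q, hQ⟩ := heval
  refine ⟨Q, ?_⟩
  apply mul_left_cancel₀ hne
  calc ((2:ℤ)^m - 1) * ∑ j ∈ Finset.range r, ((2:ℤ) ^ m) ^ j = (2:ℤ)^n - 1 := by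
        rw [mul_comm]; exact hgeom
    _ = ((2:ℤ)^m - 1) * (PhiZ n * Q) := by rw [hQ]; ring

lemma intrinsic_unique {p n : ℕ} (hp : p.Prime) (hn : 0 < n)
    (hdvd : (p : ℤ) ∣ PhiZ n) {r : ℕ} (hr : r.Prime) (hrdvd : r ∣ n)
    (hord : orderOf (2 : ZMod p) ∣ n / r) : r = p := by
  haveI : Fact p.Prime := ⟨hp⟩
  have hS : (p : ℤ) ∣ ∑ j ∈ Finset.range r, ((2:ℤ) ^ (n / r)) ^ j :=
    hdvd.trans (PhiZ_dvd_geom hrdvd hr.one_lt hn)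
  have h2 : (2 : ZMod p) ^ (n / r) = 1 := orderOf_dvd_iff_pow_eq_one.mp hord
  have hcast : ((∑ j ∈ Finset.range r, ((2:ℤ) ^ (n / r)) ^ j : ℤ) : ZMod p) = (r : ZMod p) := by
    push_cast
    rw [h2]
    simp
  have hzero : ((r : ℕ) : ZMod p) = 0 := by
    rw [← hcast]
    exact_mod_cast (ZMod.intCast_zmod_eq_zero_iff_dvd _ _).mpr hS
  have : p ∣ r := (ZMod.natCast_eq_zero_iff _ _).mp hzero
  exact ((Nat.prime_dvd_prime_iff_eq hp hr).mp this).symm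

lemma binom_aux (x : ℤ) : ∀ j : ℕ, (x ^ 2) ∣ ((1 + x) ^ j - (1 + j * x))
  | 0 => by simp
  | (j + 1) => by
    have ih := binom_aux x j
    have : (1 + x) ^ (j+1) - (1 + (j+1 : ℕ) * x)
        = ((1 + x) ^ j - (1 + j * x)) * (1 + x) + x^2 * j := by
      push_cast
      ring
    rw [this]
    exact dvd_add (ih.mul_right _) (dvd_mul_right _ _)

lemma intrinsic_sq_not_dvd {p n : ℕ} (hp : p.Prime) (hp2 : p ≠ 2) (hn : 0 < n)
    (hpdvdn : p ∣ n) (hord : orderOf (2 : ZMod p) ∣ n / p) :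
    ¬ ((p : ℤ) ^ 2 ∣ PhiZ n) := by
  haveI : Fact p.Prime := ⟨hp⟩
  intro hsq
  set m := n / p with hm
  set S := ∑ j ∈ Finset.range p, ((2:ℤ) ^ m) ^ j with hSdef
  have hSdvd : (p:ℤ)^2 ∣ S := hsq.trans (PhiZ_dvd_geom hpdvdn hp.one_lt hn)
  set x := (2:ℤ) ^ m - 1 with hx
  have hpx : (p:ℤ) ∣ x := by
    have h2 : (2 : ZMod p) ^ m = 1 := orderOf_dvd_iff_pow_eq_one.mp hord
    have : ((x : ℤ) : ZMod p) = 0 := by rw [hx]; push_cast; rw [h2]; ring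
    exact_mod_cast (ZMod.intCast_zmod_eq_zero_iff_dvd _ _).mp this
  -- S = sum (1+x)^j
  have hS2 : S = ∑ j ∈ Finset.range p, (1 + x) ^ j := by
    apply Finset.sum_congr rfl
    intro j _
    rw [hx]; ring_nf
  have hsumid : (∑ j ∈ Finset.range p, (j:ℤ)) * 2 = p * (p - 1) := by
    have hnat := Finset.sum_range_id_mul_two p
    have h1 : 1 ≤ p := hp.pos
    zify [h1] at hnat
    push_cast at hnat ⊢
    linarith [hnat]
  obtain ⟨k, hk⟩ := hp.odd_of_ne_two hp2
  have hpsum : (∑ j ∈ Finset.range p, (j:ℤ)) = p * k := by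
    apply mul_right_cancel₀ (two_ne_zero)
    rw [hsumid]
    push_cast [hk]
    ring
  have hx2 : (p:ℤ)^2 ∣ x ^ 2 := pow_dvd_pow_of_dvd hpx 2
  have hkey : (p:ℤ)^2 ∣ S - ((p:ℤ) + x * ∑ j ∈ Finset.range p, (j:ℤ)) := by
    have hsplit : S - ((p:ℤ) + x * ∑ j ∈ Finset.range p, (j:ℤ))
        = ∑ j ∈ Finset.range p, ((1 + x) ^ j - (1 + j * x)) := by
      rw [hS2, Finset.sum_sub_distrib, Finset.sum_add_distrib]
      rw [Finset.sum_const, ← Finset.sum_mul]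
      simp [mul_comm]
    rw [hsplit]
    exact Finset.dvd_sum fun j _ => hx2.trans (binom_aux x j)
  have hfinal : (p:ℤ)^2 ∣ (p:ℤ) := by
    have h1 : (p:ℤ)^2 ∣ ((p:ℤ) + x * ∑ j ∈ Finset.range p, (j:ℤ)) := by
      have := dvd_sub hSdvd hkey
      simpa using this
    have h2 : (p:ℤ)^2 ∣ x * ∑ j ∈ Finset.range p, (j:ℤ) := by
      rw [hpsum, sq]
      exact mul_dvd_mul hpx (Dvd.intro k rfl)
    simpa using dvd_sub h1 h2
  have hple : (p:ℤ)^2 ≤ p := Int.le_of_dvd (by exact_mod_cast hp.pos) hfinal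
  have : (1:ℤ) < p := by exact_mod_cast hp.one_lt
  nlinarith

lemma Q3 (S : Finset ℕ) (a : ℕ → ℚ) (h0 : ∀ i ∈ S, 0 ≤ a i) (h1 : ∀ i ∈ S, a i ≤ 1) :
    1 - ∑ i ∈ S, a i ≤ ∏ i ∈ S, (1 - a i) := by
  classical
  induction S using Finset.induction with
  | empty => simp
  | @insert x s hx ih =>
    rw [Finset.prod_insert hx, Finset.sum_insert hx]
    have ha0 : 0 ≤ a x := h0 x (Finset.mem_insert_self _ _)
    have ha1 : a x ≤ 1 := h1 x (Finset.mem_insert_self _ _)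
    have hsum0 : 0 ≤ ∑ i ∈ s, a i :=
      Finset.sum_nonneg fun i hi => h0 i (Finset.mem_insert_of_mem hi)
    have hih : 1 - ∑ i ∈ s, a i ≤ ∏ i ∈ s, (1 - a i) :=
      ih (fun i hi => h0 i (Finset.mem_insert_of_mem hi))
         (fun i hi => h1 i (Finset.mem_insert_of_mem hi))
    nlinarith

lemma Icc_sum_bound : ∀ M : ℕ, 1 ≤ M → ∑ i ∈ Finset.Icc 2 M, ((1:ℚ)/2) ^ i ≤ 1/2 - (1/2) ^ M
  | 0, h => by omega
  | 1, _ => by norm_num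
  | (M+2), _ => by
    have ih := Icc_sum_bound (M+1) (by omega)
    have hins : Finset.Icc 2 (M+2) = insert (M+2) (Finset.Icc 2 (M+1)) := by
      ext i
      simp [Finset.mem_Icc, Finset.mem_insert]
      omega
    rw [hins, Finset.sum_insert (by simp)]
    have : ((1:ℚ)/2) ^ (M+1+1) ≤ (1/2)^(M+1) - (1/2)^(M+1+1) := by
      rw [pow_succ]
      have hp : (0:ℚ) < (1/2)^(M+1) := by positivity
      nlinarith
    linarith

lemma Q2 (S : Finset ℕ) (h2 : ∀ i ∈ S, 2 ≤ i) :
    (1:ℚ)/2 ≤ ∏ i ∈ S, (1 - (1/2) ^ i) := by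
  classical
  have hQ3 := Q3 S (fun i => (1/2) ^ i) (fun i _ => by positivity)
    (fun i hi => by
      have := h2 i hi
      calc ((1:ℚ)/2)^i ≤ 1^i := pow_le_pow_left₀ (by norm_num) (by norm_num) i
        _ = 1 := one_pow i)
  rcases S.eq_empty_or_nonempty with rfl | hne
  · simp; norm_num
  · set M := S.max' hne with hM
    have hM1 : 1 ≤ M := le_trans (by omega) (h2 _ (S.max'_mem hne))
    have hsub : S ⊆ Finset.Icc 2 M := fun i hi =>
      Finset.mem_Icc.mpr ⟨h2 i hi, S.le_max' i hi⟩
    have hsum : ∑ i ∈ S, ((1:ℚ)/2) ^ i ≤ 1/2 - (1/2)^M := by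
      calc ∑ i ∈ S, ((1:ℚ)/2) ^ i ≤ ∑ i ∈ Finset.Icc 2 M, ((1:ℚ)/2) ^ i :=
            Finset.sum_le_sum_of_subset_of_nonneg hsub (fun i _ _ => by positivity)
        _ ≤ 1/2 - (1/2)^M := Icc_sum_bound M hM1
    have hp : (0:ℚ) < (1/2)^M := by positivity
    linarith

lemma Q1 (S : Finset ℕ) (hpos : ∀ i ∈ S, 0 < i) :
    (1:ℚ)/4 ≤ ∏ i ∈ S, (1 - (1/2) ^ i) := by
  classical
  by_cases h1 : 1 ∈ S
  · rw [← Finset.insert_erase h1, Finset.prod_insert (Finset.notMem_erase _ _)]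
    have h2 : ∀ i ∈ S.erase 1, 2 ≤ i := fun i hi => by
      have := hpos i (Finset.mem_of_mem_erase hi)
      have := Finset.ne_of_mem_erase hi
      omega
    have := Q2 _ h2
    norm_num
    linarith
  · have h2 : ∀ i ∈ S, 2 ≤ i := fun i hi => by
      have := hpos i hi
      rcases Nat.lt_or_ge i 2 with h | h
      · interval_cases i <;> simp_all
      · exact h
    linarith [Q2 S h2]

lemma Q (S : Finset ℕ) (hpos : ∀ i ∈ S, 0 < i) :
    (2:ℚ) ^ (∑ i ∈ S, i) ≤ 4 * ∏ i ∈ S, ((2:ℚ) ^ i - 1) := by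
  have hsplit : ∏ i ∈ S, ((2:ℚ) ^ i - 1) = (∏ i ∈ S, (2:ℚ)^i) * ∏ i ∈ S, (1 - (1/2)^i) := by
    rw [← Finset.prod_mul_distrib]
    apply Finset.prod_congr rfl
    intro i _
    have h2 : ((2:ℚ)^i) ≠ 0 := by positivity
    have : ((1:ℚ)/2)^i = 1 / 2^i := by
      rw [div_pow, one_pow]
    rw [this]
    field_simp
  rw [hsplit, ← Finset.prod_pow_eq_pow_sum]
  have h1 := Q1 S hpos
  have hp : (0:ℚ) < ∏ i ∈ S, (2:ℚ)^i := Finset.prod_pos fun i _ => by positivity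
  nlinarith

lemma mu_trichotomy (k : ℕ) : μ k = 1 ∨ μ k = -1 ∨ μ k = 0 := by
  by_cases hsq : Squarefree k
  · rw [ArithmeticFunction.moebius_apply_of_squarefree hsq]
    rcases Nat.even_or_odd (ArithmeticFunction.cardFactors k) with h | h
    · left; exact h.neg_one_pow
    · right; left; exact h.neg_one_pow
  · right; right; exact ArithmeticFunction.moebius_eq_zero_of_not_squarefree hsq

lemma totient_eq_sum_antidiag (n : ℕ) (hn : 0 < n) :
    ∑ x ∈ n.divisorsAntidiagonal, (μ x.1) • ((x.2 : ℤ)) = (n.totient : ℤ) := by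
  refine (ArithmeticFunction.sum_eq_iff_sum_smul_moebius_eq
    (R := ℤ) (f := fun i => (i.totient : ℤ)) (g := fun i => (i : ℤ))).mp ?_ n hn
  intro k hk
  exact_mod_cast Nat.sum_totient k

lemma PhiZ_lower (n : ℕ) (hn : 0 < n) : (2 : ℚ) ^ n.totient ≤ 4 * (PhiZ n : ℚ) := by
  classical
  set T := n.divisorsAntidiagonal with hT
  set T1 := T.filter (fun x => μ x.1 = 1) with hT1
  set Tn := T.filter (fun x => ¬ μ x.1 = 1) with hTn
  set T2 := Tn.filter (fun x => μ x.1 = -1) with hT2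
  set T0 := Tn.filter (fun x => ¬ μ x.1 = -1) with hT0
  have hx2pos : ∀ x ∈ T, 0 < x.2 := fun x hx =>
    Nat.pos_of_mem_divisors (Nat.snd_mem_divisors_of_mem_antidiagonal hx)
  set v : ℕ × ℕ → ℚ := fun x => (2:ℚ) ^ x.2 - 1 with hv
  have hvpos : ∀ x ∈ T, 0 < v x := by
    intro x hx
    have h1 : (2:ℚ)^(1:ℕ) ≤ 2 ^ x.2 := pow_le_pow_right₀ (by norm_num) (hx2pos x hx)
    simp only [hv]
    norm_num at h1 ⊢
    linarith
  -- Möbius inversion for products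
  have hinv : ∏ x ∈ T, v x ^ (μ x.1) = ((PhiZ n : ℤ) : ℚ) := by
    refine (ArithmeticFunction.prod_eq_iff_prod_pow_moebius_eq_of_nonzero
      (R := ℚ) (f := fun i => ((PhiZ i : ℤ) : ℚ)) (g := fun i => (2:ℚ) ^ i - 1)
      (fun k hk => by
        exact_mod_cast (PhiZ_pos k).ne')
      (fun k hk => by
        have h1 : (2:ℚ)^(1:ℕ) ≤ 2 ^ k := pow_le_pow_right₀ (by norm_num) hk
        norm_num at h1 ⊢
        linarith)).mp ?_ n hn
    intro k hk
    have := prod_PhiZ k hk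
    have hc := congrArg (Int.cast : ℤ → ℚ) this
    push_cast at hc ⊢
    convert hc using 2
  -- split the product
  have hT2T : T2 ⊆ T := (Finset.filter_subset _ _).trans (Finset.filter_subset _ _)
  have hT1T : T1 ⊆ T := Finset.filter_subset _ _
  have hTsplit : ∏ x ∈ T, v x ^ (μ x.1) = (∏ x ∈ T1, v x) * (∏ x ∈ T2, v x)⁻¹ := by
    rw [← Finset.prod_filter_mul_prod_filter_not T (fun x => μ x.1 = 1)]
    congr 1
    · apply Finset.prod_congr rfl
      intro x hx
      rw [(Finset.mem_filter.mp hx).2, zpow_one]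
    · rw [← Finset.prod_filter_mul_prod_filter_not Tn (fun x => μ x.1 = -1)]
      have h0 : ∏ x ∈ T0, v x ^ (μ x.1) = 1 := Finset.prod_eq_one (by
        intro x hx
        have h1 := (Finset.mem_filter.mp (Finset.mem_filter.mp hx).1).2
        have h2 := (Finset.mem_filter.mp hx).2
        rcases mu_trichotomy x.1 with h | h | h
        · exact absurd h h1
        · exact absurd h h2
        · rw [h, zpow_zero])
      rw [← hT0, ← hT2, h0, mul_one]
      rw [← Finset.prod_inv_distrib]
      apply Finset.prod_congr rfl
      intro x hx
      rw [(Finset.mem_filter.mp hx).2]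
      simp
  -- split the sum
  have hsumsplit : (∑ x ∈ T1, (x.2:ℤ)) - (∑ x ∈ T2, (x.2:ℤ)) = (n.totient : ℤ) := by
    rw [← totient_eq_sum_antidiag n hn]
    rw [← Finset.sum_filter_add_sum_filter_not T (fun x => μ x.1 = 1)
      (fun x => (μ x.1) • ((x.2 : ℤ)))]
    rw [← Finset.sum_filter_add_sum_filter_not Tn (fun x => μ x.1 = -1)
      (fun x => (μ x.1) • ((x.2 : ℤ)))]
    have e1 : ∑ x ∈ T1, (μ x.1) • ((x.2 : ℤ)) = ∑ x ∈ T1, (x.2:ℤ) := by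
      apply Finset.sum_congr rfl
      intro x hx
      rw [(Finset.mem_filter.mp hx).2, one_smul]
    have e2 : ∑ x ∈ Tn.filter (fun x => μ x.1 = -1), (μ x.1) • ((x.2 : ℤ))
        = - ∑ x ∈ T2, (x.2:ℤ) := by
      rw [← hT2, ← Finset.sum_neg_distrib]
      apply Finset.sum_congr rfl
      intro x hx
      rw [(Finset.mem_filter.mp hx).2]
      simp
    have e3 : ∑ x ∈ Tn.filter (fun x => ¬ μ x.1 = -1), (μ x.1) • ((x.2 : ℤ)) = 0 := by
      apply Finset.sum_eq_zero
      intro x hx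
      have h1 := (Finset.mem_filter.mp (Finset.mem_filter.mp hx).1).2
      have h2 := (Finset.mem_filter.mp hx).2
      rcases mu_trichotomy x.1 with h | h | h
      · exact absurd h h1
      · exact absurd h h2
      · rw [h, zero_smul]
    rw [e1, e2, e3]
    ring
  set A := ∑ x ∈ T1, x.2 with hA
  set B := ∑ x ∈ T2, x.2 with hB
  have hAB : A = B + n.totient := by
    have h1 : (A:ℤ) = ∑ x ∈ T1, (x.2:ℤ) := by rw [hA]; push_cast; rfl
    have h2 : (B:ℤ) = ∑ x ∈ T2, (x.2:ℤ) := by rw [hB]; push_cast; rfl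
    have : (A:ℤ) - B = n.totient := by rw [h1, h2]; exact hsumsplit
    omega
  -- lower bound on the positive part
  have hbound1 : (2:ℚ) ^ A ≤ 4 * ∏ x ∈ T1, v x := by
    classical
    have hinj : Set.InjOn Prod.snd (T1 : Set (ℕ × ℕ)) := by
      intro x hx y hy hxy
      have hx' : x.1 * x.2 = n := (Nat.mem_divisorsAntidiagonal.mp (hT1T hx)).1
      have hy' : y.1 * y.2 = n := (Nat.mem_divisorsAntidiagonal.mp (hT1T hy)).1
      have hx2 : 0 < x.2 := hx2pos x (hT1T hx)
      have : x.1 = y.1 := by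
        apply Nat.eq_of_mul_eq_mul_right hx2
        rw [hx', hxy] at *
        rw [← hxy] at hy' ⊢
        omega
      exact Prod.ext this hxy
    set S := T1.image Prod.snd with hS
    have hprodeq : ∏ x ∈ T1, v x = ∏ i ∈ S, ((2:ℚ) ^ i - 1) := by
      rw [hS, Finset.prod_image (fun x hx y hy => hinj hx hy)]
    have hsumeq : A = ∑ i ∈ S, i := by
      rw [hS, Finset.sum_image (fun x hx y hy => hinj hx hy)]
    have hSpos : ∀ i ∈ S, 0 < i := by
      intro i hi
      obtain ⟨x, hx, rfl⟩ := Finset.mem_image.mp hi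
      exact hx2pos x (hT1T hx)
    rw [hprodeq, hsumeq]
    exact Q S hSpos
  -- upper bound on the negative part
  have hbound2 : ∏ x ∈ T2, v x ≤ (2:ℚ) ^ B := by
    rw [hB, ← Finset.prod_pow_eq_pow_sum]
    apply Finset.prod_le_prod
    · intro x hx
      exact (hvpos x (hT2T hx)).le
    · intro x hx
      simp only [hv]
      have : (0:ℚ) < 2 ^ x.2 := by positivity
      linarith
  have hprod2pos : (0:ℚ) < ∏ x ∈ T2, v x := Finset.prod_pos fun x hx => hvpos x (hT2T hx)
  -- combine
  have heq : ((PhiZ n : ℤ) : ℚ) * ∏ x ∈ T2, v x = ∏ x ∈ T1, v x := by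
    rw [← hinv, hTsplit]
    field_simp
  have hchain : (2:ℚ) ^ B * (2:ℚ) ^ n.totient ≤ 4 * ((PhiZ n : ℤ) : ℚ) * ∏ x ∈ T2, v x := by
    calc (2:ℚ) ^ B * (2:ℚ) ^ n.totient = 2 ^ A := by rw [← pow_add, hAB]
      _ ≤ 4 * ∏ x ∈ T1, v x := hbound1
      _ = 4 * ((PhiZ n : ℤ) : ℚ) * ∏ x ∈ T2, v x := by rw [← heq]; ring
  have h2B : (0:ℚ) < 2 ^ B := by positivity
  have hfin : (2:ℚ) ^ n.totient * ∏ x ∈ T2, v x ≤ 4 * ((PhiZ n : ℤ) : ℚ) * ∏ x ∈ T2, v x := by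
    calc (2:ℚ) ^ n.totient * ∏ x ∈ T2, v x ≤ (2:ℚ) ^ n.totient * 2 ^ B := by
          apply mul_le_mul_of_nonneg_left hbound2 (by positivity)
      _ = (2:ℚ) ^ B * 2 ^ n.totient := by ring
      _ ≤ 4 * ((PhiZ n : ℤ) : ℚ) * ∏ x ∈ T2, v x := hchain
  have := le_of_mul_le_mul_right (by linarith [hfin] : (2:ℚ) ^ n.totient * ∏ x ∈ T2, v x ≤ (4 * ((PhiZ n : ℤ) : ℚ)) * ∏ x ∈ T2, v x) hprod2pos
  exact_mod_cast this

lemma totient_ge_of_prime_dvd {p d : ℕ} (hp : p.Prime) (hdvd : p ∣ d) (hd : 0 < d) :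
    p - 1 ≤ d.totient := by
  have h1 : p.totient ∣ d.totient := Nat.totient_dvd_of_dvd hdvd
  have h2 : p.totient = p - 1 := Nat.totient_prime hp
  exact h2 ▸ Nat.le_of_dvd (Nat.totient_pos.mpr hd) h1

lemma totient_ge_four {d : ℕ} (hd : Odd d) (h5 : 5 ≤ d) : 4 ≤ d.totient := by
  have hd0 : 0 < d := by omega
  by_cases hbig : ∃ p, p.Prime ∧ p ∣ d ∧ 5 ≤ p
  · obtain ⟨p, hp, hpd, hp5⟩ := hbig
    have := totient_ge_of_prime_dvd hp hpd hd0
    omega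
  · push_neg at hbig
    have hall : ∀ {q : ℕ}, q.Prime → q ∣ d → q = 3 := by
      intro q hq hqd
      have hq2 : q ≠ 2 := by
        rintro rfl
        rw [Nat.odd_iff] at hd
        omega
      have hq5 : q < 5 := hbig q hq hqd
      interval_cases q <;> first | rfl | (exfalso; revert hq; decide) | (exact absurd rfl hq2)
    have hpow := Nat.eq_prime_pow_of_unique_prime_dvd hd0.ne' hall
    set k := d.primeFactorsList.length
    have hk2 : 2 ≤ k := by
      by_contra hk
      push_neg at hk
      interval_cases k <;> omega
    have h9 : 9 ∣ d := by
      rw [hpow]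
      calc (9:ℕ) = 3 ^ 2 := by norm_num
        _ ∣ 3 ^ k := pow_dvd_pow 3 hk2
    have := totient_ge_of_prime_dvd (p := 3) (by norm_num) (dvd_trans (by norm_num) h9) hd0
    have h6 : (9:ℕ).totient ∣ d.totient := Nat.totient_dvd_of_dvd h9
    have : (9:ℕ).totient = 6 := by decide
    have := Nat.le_of_dvd (Nat.totient_pos.mpr hd0) h6
    omega

lemma four_mul_lt_two_pow : ∀ j : ℕ, 4 * (j + 7) < 2 ^ (j + 6)
  | 0 => by norm_num
  | (j+1) => by
    have ih := four_mul_lt_two_pow j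
    have : (2:ℕ) ^ (j + 1 + 6) = 2 * 2 ^ (j + 6) := by
      rw [show j + 1 + 6 = (j + 6) + 1 by omega, pow_succ]
      ring
    omega

lemma orderOf_two_zmod_three : orderOf (2 : ZMod 3) = 2 := by
  rw [orderOf_eq_iff (by norm_num : 0 < 2)]
  decide

lemma orderOf_two_zmod_five : orderOf (2 : ZMod 5) = 4 := by
  rw [orderOf_eq_iff (by norm_num : 0 < 4)]
  decide

lemma zsigmondy {d : ℕ} (hd : Odd d) (h5 : 5 ≤ d) :
    ∃ p : ℕ, p.Prime ∧ (p : ℤ) ∣ PhiZ (2 * d) ∧ orderOf (2 : ZMod p) = 2 * d := by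
  set n := 2 * d with hn
  have hn0 : 0 < n := by omega
  have hd0 : 0 < d := by omega
  by_contra hcon
  push_neg at hcon
  set A := (PhiZ n).toNat with hA
  have hAZ : (A : ℤ) = PhiZ n := Int.toNat_of_nonneg (PhiZ_pos n).le
  have hA0 : 0 < A := by
    have := PhiZ_pos n
    omega
  have hA2d : A ∣ 2 ^ d + 1 := by
    have := PhiZ_two_mul_dvd hd hd0
    rw [← hAZ] at this
    exact_mod_cast this
  -- structure of any prime divisor of A
  have hstruct : ∀ q : ℕ, q.Prime → q ∣ A →
      q ∣ n ∧ q ≠ 2 ∧ orderOf (2 : ZMod q) ∣ q - 1 ∧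
      n = orderOf (2 : ZMod q) * q ^ (n / orderOf (2 : ZMod q)).primeFactorsList.length ∧
      1 ≤ (n / orderOf (2 : ZMod q)).primeFactorsList.length := by
    intro q hq hqA
    haveI : Fact q.Prime := ⟨hq⟩
    have hqPhi : (q : ℤ) ∣ PhiZ n := hAZ ▸ Int.natCast_dvd_natCast.mpr hqA
    have hq2d : q ∣ 2 ^ d + 1 := hqA.trans hA2d
    have hq2 : q ≠ 2 := prime_ne_two_of_dvd hq hd0 hq2d
    have hqn : q ∣ n := by
      by_contra hqn
      exact hcon q hq hqPhi (orderOf_eq_of_not_dvd hq hn0 hqn hqPhi)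
    set t := orderOf (2 : ZMod q) with ht
    have hneg : (2 : ZMod q) ^ d = -1 := pow_eq_neg_one_of_dvd hq hd0 hq2d
    have htn : t ∣ n := by
      apply orderOf_dvd_of_pow_eq_one
      rw [hn, mul_comm, pow_mul, hneg]
      ring
    have ht0 : 0 < t := Nat.pos_of_dvd_of_pos htn hn0
    have htq : t ∣ q - 1 := by
      apply orderOf_dvd_of_pow_eq_one
      exact ZMod.pow_card_sub_one_eq_one (two_ne_zero_zmod hq hq2)
    have hqt : ¬ q ∣ t := by
      intro h
      have h1 : q ≤ t := Nat.le_of_dvd ht0 h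
      have h2 : t ≤ q - 1 := Nat.le_of_dvd (by have := hq.one_lt; omega) htq
      omega
    -- every prime of n / t is q
    have huniq : ∀ {r : ℕ}, r.Prime → r ∣ n / t → r = q := by
      intro r hr hrdvd
      obtain ⟨m, hm⟩ := htn
      rw [hm, Nat.mul_div_cancel_left _ ht0] at hrdvd
      obtain ⟨s, hs⟩ := hrdvd
      have hrn : r ∣ n := by rw [hm, hs]; exact ⟨t * s, by ring⟩
      refine intrinsic_unique hq hn0 hqPhi hr hrn ?_
      have : n / r = t * s := by
        rw [hm, hs]
        rw [show t * (r * s) = r * (t * s) by ring]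
        exact Nat.mul_div_cancel_left _ hr.pos
      rw [this]
      exact ⟨s, rfl⟩
    have hnt0 : n / t ≠ 0 := by
      have : t ≤ n := Nat.le_of_dvd hn0 htn
      have := Nat.div_pos this ht0
      omega
    have hpow := Nat.eq_prime_pow_of_unique_prime_dvd hnt0 huniq
    have hqnt : q ∣ n / t := by
      obtain ⟨m, hm⟩ := htn
      rw [hm, Nat.mul_div_cancel_left _ ht0]
      rcases (Nat.Prime.dvd_mul hq).mp (hm ▸ hqn) with h | h
      · exact absurd h hqt
      · exact h
    have hk1 : 1 ≤ (n / t).primeFactorsList.length := by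
      rcases Nat.eq_zero_or_pos ((n / t).primeFactorsList.length) with h | h
      · exfalso
        rw [h, pow_zero] at hpow
        rw [hpow] at hqnt
        have := Nat.le_of_dvd one_pos hqnt
        have := hq.two_le
        omega
      · exact h
    refine ⟨hqn, hq2, htq, ?_, hk1⟩
    calc n = t * (n / t) := (Nat.mul_div_cancel' htn).symm
      _ = t * q ^ (n / t).primeFactorsList.length := by rw [← hpow]
  -- uniqueness of prime divisors of A
  have huniqA : ∀ {q1 q2 : ℕ}, q1.Prime → q1 ∣ A → q2.Prime → q2 ∣ A → q1 = q2 := by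
    intro q1 q2 hq1 hq1A hq2 hq2A
    by_contra hne
    obtain ⟨hq1n, hq12, ht1q, hn1, hk1⟩ := hstruct q1 hq1 hq1A
    obtain ⟨hq2n, hq22, ht2q, hn2, hk2⟩ := hstruct q2 hq2 hq2A
    have hd1 : q2 ∣ q1 - 1 := by
      have : q2 ∣ orderOf (2 : ZMod q1) * q1 ^ (n / orderOf (2 : ZMod q1)).primeFactorsList.length := hn1 ▸ hq2n
      rcases (Nat.Prime.dvd_mul hq2).mp this with h | h
      · exact h.trans ht1q
      · exact absurd (hq2.dvd_of_dvd_pow h) (fun hh => hne ((Nat.prime_dvd_prime_iff_eq hq2 hq1).mp hh).symm)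
    have hd2 : q1 ∣ q2 - 1 := by
      have : q1 ∣ orderOf (2 : ZMod q2) * q2 ^ (n / orderOf (2 : ZMod q2)).primeFactorsList.length := hn2 ▸ hq1n
      rcases (Nat.Prime.dvd_mul hq1).mp this with h | h
      · exact h.trans ht2q
      · exact absurd (hq1.dvd_of_dvd_pow h) (fun hh => hne ((Nat.prime_dvd_prime_iff_eq hq1 hq2).mp hh))
    have h1 : q2 ≤ q1 - 1 := Nat.le_of_dvd (by have := hq1.one_lt; omega) hd1
    have h2 : q1 ≤ q2 - 1 := Nat.le_of_dvd (by have := hq2.one_lt; omega) hd2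
    omega
  -- size bound
  have hsize : 2 ^ d.totient ≤ 4 * A := by
    have h1 := PhiZ_lower n hn0
    have h2 : n.totient = d.totient := by
      rw [hn, Nat.totient_mul (Nat.coprime_two_left.mpr hd), Nat.totient_two, one_mul]
    rw [h2, ← hAZ] at h1
    exact_mod_cast h1
  -- case analysis
  by_cases hA1 : A = 1
  · have h4 := totient_ge_four hd h5
    rw [hA1] at hsize
    have : 2 ^ 4 ≤ 2 ^ d.totient := Nat.pow_le_pow_right (by norm_num) h4
    omega
  · obtain ⟨q, hq, hqA⟩ := Nat.exists_prime_and_dvd hA1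
    have hq2' : q ≠ 2 := prime_ne_two_of_dvd hq hd0 (hqA.trans hA2d)
    have hq357 : 7 ≤ q ∨ q = 3 ∨ q = 5 := by
      rcases Nat.lt_or_ge q 7 with h7 | h7
      · right
        have := hq.two_le
        interval_cases q
        · exact absurd rfl hq2'
        · left; rfl
        · exact absurd hq (by decide)
        · right; rfl
        · exact absurd hq (by decide)
      · exact Or.inl h7
    have hallq : ∀ {r : ℕ}, r.Prime → r ∣ A → r = q := fun hr hrA => huniqA hr hrA hq hqA
    have hApow := Nat.eq_prime_pow_of_unique_prime_dvd hA0.ne' hallq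
    obtain ⟨hqn, hq2, htq, hnstruct, hk1⟩ := hstruct q hq hqA
    haveI : Fact q.Prime := ⟨hq⟩
    set t := orderOf (2 : ZMod q) with ht
    set k := (n / t).primeFactorsList.length with hk
    -- A ≤ q since q^2 does not divide A
    have hsqnot : ¬ (q * q ∣ A) := by
      intro hsq
      have hqq : (q:ℤ)^2 ∣ PhiZ n := by
        rw [← hAZ]
        have : ((q * q : ℕ) : ℤ) ∣ (A:ℤ) := Int.natCast_dvd_natCast.mpr hsq
        push_cast at this
        rw [sq]
        exact this
      refine intrinsic_sq_not_dvd hq hq2 hn0 hqn ?_ hqq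
      -- t ∣ n / q
      have : n / q = t * q ^ (k - 1) := by
        rw [hnstruct]
        rw [show t * q ^ k = q * (t * q ^ (k-1)) by
          calc t * q ^ k = t * q ^ ((k-1)+1) := by rw [show (k-1)+1 = k by omega]
            _ = q * (t * q ^ (k-1)) := by rw [pow_succ]; ring]
        exact Nat.mul_div_cancel_left _ hq.pos
      rw [this]
      exact ⟨q ^ (k-1), rfl⟩
    have hAq : A = q := by
      set l := A.primeFactorsList.length with hl
      have hl1 : l ≤ 1 := by
        by_contra hll
        push_neg at hll
        apply hsqnot
        rw [hApow]
        calc q * q = q ^ 2 := (sq q).symm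
          _ ∣ q ^ l := pow_dvd_pow q hll
      have hl0 : l ≠ 0 := by
        intro h
        rw [hApow, h] at hA1
        simp at hA1
      have : l = 1 := by omega
      rw [hApow, this, pow_one]
    -- q is odd, q ∣ d
    have hqd : q ∣ d := by
      rcases (Nat.Prime.dvd_mul hq).mp (hn ▸ hqn) with h | h
      · exact absurd ((Nat.prime_dvd_prime_iff_eq hq Nat.prime_two).mp h) hq2
      · exact h
    -- final case analysis on q
    rcases hq357 with hq7 | rfl | rfl
    · -- q ≥ 7
      have hphi : q - 1 ≤ d.totient := totient_ge_of_prime_dvd hq hqd hd0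
      have hbig := four_mul_lt_two_pow (q - 7)
      have h1 : 2 ^ (q - 1) ≤ 2 ^ d.totient := Nat.pow_le_pow_right (by norm_num) hphi
      have h2 : q - 7 + 7 = q := by omega
      have h3 : q - 7 + 6 = q - 1 := by omega
      rw [h2, h3] at hbig
      rw [hAq] at hsize
      omega
    · -- q = 3
      have ht3 : t = 2 := by rw [ht, orderOf_two_zmod_three]
      rw [ht3] at hnstruct
      have hd3 : d = 3 ^ k := by omega
      have hk2 : 2 ≤ k := by
        by_contra hkk
        push_neg at hkk
        interval_cases k <;> omega
      have h9 : 9 ∣ d := by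
        rw [hd3]
        calc (9:ℕ) = 3 ^ 2 := by norm_num
          _ ∣ 3 ^ k := pow_dvd_pow 3 hk2
      have h6 : (6:ℕ) ≤ d.totient := by
        have h6' : (9:ℕ).totient ∣ d.totient := Nat.totient_dvd_of_dvd h9
        have h9' : (9:ℕ).totient = 6 := by decide
        have := Nat.le_of_dvd (Nat.totient_pos.mpr hd0) h6'
        omega
      have : 2 ^ 6 ≤ 2 ^ d.totient := Nat.pow_le_pow_right (by norm_num) h6
      rw [hAq] at hsize
      omega
    · -- q = 5
      have ht5 : t = 4 := by rw [ht, orderOf_two_zmod_five]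
      rw [ht5] at hnstruct
      have : d % 2 = 1 := Nat.odd_iff.mp hd
      omega

lemma exists_good {d : ℕ} (hd : Odd d) (h1 : 1 < d) :
    ∃ p : ℕ, p.Prime ∧ p ∣ 2 ^ d + 1 ∧
      (∀ e : ℕ, e ∣ d → 1 < e → e < d → ¬ p ∣ 2 ^ e + 1) ∧ (d ≠ 3 → p ≠ 3) := by
  by_cases hd3 : d = 3
  · subst hd3
    refine ⟨3, by norm_num, by norm_num, ?_, fun h => absurd rfl h⟩
    intro e hed h1e hed3
    have : e ≤ 3 := Nat.le_of_dvd (by norm_num) hed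
    interval_cases e
    · intro h
      revert hed
      norm_num
  · have h5 : 5 ≤ d := by
      have := Nat.odd_iff.mp hd
      omega
    obtain ⟨p, hp, hpPhi, hord⟩ := zsigmondy hd h5
    have hd0 : 0 < d := by omega
    have hpd : p ∣ 2 ^ d + 1 := by
      have h2 : (p:ℤ) ∣ ((2 ^ d + 1 : ℕ) : ℤ) := by
        refine hpPhi.trans ?_
        have := PhiZ_two_mul_dvd hd hd0
        push_cast
        exact this
      exact_mod_cast h2
    have hkey : ∀ e : ℕ, 0 < e → e < d → ¬ p ∣ 2 ^ e + 1 := by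
      intro e he0 hed hpe
      have hneg : (2 : ZMod p) ^ e = -1 := pow_eq_neg_one_of_dvd hp he0 hpe
      have hone : (2 : ZMod p) ^ (2 * e) = 1 := by
        rw [mul_comm, pow_mul, hneg]
        ring
      have hdvd : 2 * d ∣ 2 * e := hord ▸ orderOf_dvd_of_pow_eq_one hone
      have := Nat.le_of_dvd (by omega) hdvd
      omega
    refine ⟨p, hp, hpd, fun e hed h1e hedlt => hkey e (by omega) hedlt, fun _ => ?_⟩
    intro hp3
    subst hp3
    exact hkey 1 (by norm_num) (by omega) (by norm_num)

theorem omega_ge_tau_sub_one (N : ℕ) (hN : 0 < N) (hodd : Odd N) :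
    (2 ^ N + 1).primeFactors.card ≥ N.divisors.card - 1 := by
  classical
  set S := N.divisors.erase 1 with hS
  have hmem : ∀ d ∈ S, Odd d ∧ 1 < d ∧ d ∣ N := by
    intro d hdS
    have h1 : d ≠ 1 := Finset.ne_of_mem_erase hdS
    have h2 : d ∣ N := (Nat.mem_divisors.mp (Finset.mem_of_mem_erase hdS)).1
    obtain ⟨k, hk⟩ := h2
    have hodd' : Odd d := (Nat.odd_mul.mp (hk ▸ hodd)).1
    have hd0 : 0 < d := by
      rcases Nat.eq_zero_or_pos d with rfl | h
      · rw [hk] at hN; simp at hk; omega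
      · exact h
    exact ⟨hodd', by omega, ⟨k, hk⟩⟩
  have hch : ∀ d : ℕ, d ∈ S → ∃ p : ℕ, p.Prime ∧ p ∣ 2 ^ d + 1 ∧
      (∀ e : ℕ, e ∣ d → 1 < e → e < d → ¬ p ∣ 2 ^ e + 1) ∧ (d ≠ 3 → p ≠ 3) := by
    intro d hdS
    obtain ⟨ho, h1, -⟩ := hmem d hdS
    exact exists_good ho h1
  choose! f hprime hdvd hprimitive hne3 using hch
  have hmaps : ∀ d ∈ S, f d ∈ (2 ^ N + 1).primeFactors := by
    intro d hdS
    obtain ⟨ho, h1, hdN⟩ := hmem d hdS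
    rw [Nat.mem_primeFactors]
    refine ⟨hprime d hdS, (hdvd d hdS).trans (pow_add_one_dvd hdN hodd (by omega)), by positivity⟩
  -- injectivity helper
  have hinj2 : ∀ d ∈ S, ∀ d' ∈ S, d < d' → f d = f d' → False := by
    intro d hdS d' hdS' hlt heq
    obtain ⟨ho, h1, -⟩ := hmem d hdS
    obtain ⟨ho', h1', -⟩ := hmem d' hdS'
    set p := f d' with hp
    have hpprime : p.Prime := hprime d' hdS'
    have hpd : p ∣ 2 ^ d + 1 := heq ▸ hdvd d hdS
    have hpd' : p ∣ 2 ^ d' + 1 := hdvd d' hdS'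
    have hgcd : p ∣ 2 ^ Nat.gcd d d' + 1 :=
      dvd_gcd_pow_add_one hpprime ho ho' (by omega) (by omega) hpd hpd'
    set g := Nat.gcd d d' with hg
    have hgd : g ∣ d' := Nat.gcd_dvd_right d d'
    have hgle : g ≤ d := Nat.le_of_dvd (by omega) (Nat.gcd_dvd_left d d')
    rcases Nat.lt_or_ge 1 g with hg1 | hg1
    · exact hprimitive d' hdS' g hgd hg1 (by omega) hgcd
    · have hg0 : 0 < g := Nat.gcd_pos_of_pos_left _ (by omega)
      have : g = 1 := by omega
      rw [this] at hgcd
      norm_num at hgcd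
      have hp3 : p = 3 := (Nat.prime_dvd_prime_iff_eq hpprime (by norm_num)).mp hgcd
      have hd3 : 3 ≤ d := by
        have := Nat.odd_iff.mp ho
        omega
      exact hne3 d' hdS' (by omega) hp3
  have hinj : Set.InjOn f (S : Set ℕ) := by
    intro d hdS d' hdS' heq
    by_contra hne
    rcases Nat.lt_or_ge d d' with h | h
    · exact hinj2 d hdS d' hdS' h heq
    · have : d' < d := by omega
      exact hinj2 d' hdS' d hdS this heq.symm
  have hcard := Finset.card_le_card_of_injOn f hmaps hinj
  have hScard : S.card = N.divisors.card - 1 := by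
    rw [hS, Finset.card_erase_of_mem (Nat.one_mem_divisors.mpr hN.ne')]
  omega
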